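/- Let X be a discrete random variable with E[X] = 0 and |X| ≤ C almost surely, for a constant C ≥ 0. Then for every t ≥ 0 with tC ≤ a, the moment generating function satisfies E[e^{tX}] ≤ 1 + (e^a/2)·t²·Var(X). -/

import Mathlib

open MeasureTheory ProbabilityTheory Real

lemma key_exp_bound {a : ℝ} (ha : 0 ≤ a) {y : ℝ} (hy : |y| ≤ a) :
    Real.exp y ≤ 1 + y + Real.exp a / 2 * y ^ 2 := by
  set g : ℝ → ℝ := fun y => 1 + y + Real.exp a / 2 * y ^ 2 - Real.exp y with hgdef
  have hg : ∀ x : ℝ, HasDerivAt g (1 + Real.exp a * x - Real.exp x) x := by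
    intro x
    have h : HasDerivAt (fun y => 1 + y + Real.exp a / 2 * y ^ 2 - Real.exp y)
        (0 + 1 + Real.exp a / 2 * (((2:ℕ):ℝ) * x ^ (2 - 1)) - Real.exp x) x := (((hasDerivAt_const x (1:ℝ)).add (hasDerivAt_id x)).add
      ((hasDerivAt_pow 2 x).const_mul (Real.exp a / 2))).sub (Real.hasDerivAt_exp x)
    convert h using 1
    simp
    ring
  have hg0 : g 0 = 0 := by simp [hgdef]
  have hcont : Continuous g := by
    have : Differentiable ℝ g := fun x => (hg x).differentiableAt
    exact this.continuous
  have habs := abs_le.mp hy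
  have hgoal : 0 ≤ g y := by
    rcases le_or_gt 0 y with hy0 | hy0
    · have hmono : MonotoneOn g (Set.Icc 0 a) := by
        apply monotoneOn_of_deriv_nonneg (convex_Icc 0 a) hcont.continuousOn
        · exact fun x _ => (hg x).differentiableAt.differentiableWithinAt
        · intro x hx
          rw [interior_Icc] at hx
          rw [(hg x).deriv]
          have h1 := Real.add_one_le_exp (-x)
          have h2 : Real.exp (-x) * Real.exp x = 1 := by
            rw [← Real.exp_add]; simp
          have h3 : Real.exp x ≤ Real.exp a := Real.exp_le_exp.mpr hx.2.le
          have h4 := Real.exp_pos x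
          nlinarith [mul_le_mul_of_nonneg_right h1 h4.le, hx.1]
      have := hmono (Set.left_mem_Icc.mpr ha) ⟨hy0, habs.2⟩ hy0
      rw [hg0] at this; exact this
    · have hanti : AntitoneOn g (Set.Icc (-a) 0) := by
        apply antitoneOn_of_deriv_nonpos (convex_Icc (-a) 0) hcont.continuousOn
        · exact fun x _ => (hg x).differentiableAt.differentiableWithinAt
        · intro x hx
          rw [interior_Icc] at hx
          rw [(hg x).deriv]
          have h1 := Real.add_one_le_exp x
          have h2 : (1:ℝ) ≤ Real.exp a := Real.one_le_exp ha
          nlinarith [hx.2]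
      have := hanti ⟨habs.1, hy0.le⟩ (Set.right_mem_Icc.mpr (neg_nonpos.mpr ha)) hy0.le
      rw [hg0] at this; exact this
  simp only [hgdef] at hgoal
  linarith

theorem stmt6 {Ω : Type*} [MeasurableSpace Ω] (μ : Measure Ω) [IsProbabilityMeasure μ]
    (X : Ω → ℝ) (hmeas : Measurable X) (hfin : (Set.range X).Finite)
    (C : ℝ) (hC : 0 ≤ C) (hbd : ∀ᵐ ω ∂μ, |X ω| ≤ C)
    (hmean : ∫ ω, X ω ∂μ = 0)
    (t a : ℝ) (ht : 0 ≤ t) (hta : t * C ≤ a) :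
    ∫ ω, Real.exp (t * X ω) ∂μ ≤
      1 + (Real.exp a / 2) * t ^ 2 * ∫ ω, (X ω) ^ 2 ∂μ := by
  have ha : 0 ≤ a := le_trans (mul_nonneg ht hC) hta
  set c : ℝ := Real.exp a / 2 * t ^ 2 with hc
  -- a.e. bound |t * X ω| ≤ a
  have hae : ∀ᵐ ω ∂μ, |t * X ω| ≤ a := by
    filter_upwards [hbd] with ω hω
    rw [abs_mul, abs_of_nonneg ht]
    calc t * |X ω| ≤ t * C := mul_le_mul_of_nonneg_left hω ht
      _ ≤ a := hta
  -- integrability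
  have hX : Integrable X μ :=
    Integrable.mono' (integrable_const C) hmeas.aestronglyMeasurable
      (by filter_upwards [hbd] with ω hω; simpa using hω)
  have hX2 : Integrable (fun ω => X ω ^ 2) μ :=
    Integrable.mono' (integrable_const (C ^ 2)) ((hmeas.pow_const 2).aestronglyMeasurable)
      (by filter_upwards [hbd] with ω hω
          rw [Real.norm_eq_abs, abs_pow]
          exact pow_le_pow_left₀ (abs_nonneg _) hω 2)
  have hexp : Integrable (fun ω => Real.exp (t * X ω)) μ :=
    Integrable.mono' (integrable_const (Real.exp a))
      ((Real.measurable_exp.comp (hmeas.const_mul t)).aestronglyMeasurable)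
      (by filter_upwards [hae] with ω hω
          rw [Real.norm_eq_abs, abs_of_pos (Real.exp_pos _)]
          exact Real.exp_le_exp.mpr (le_trans (le_abs_self _) hω))
  have hRHSint : Integrable (fun ω => 1 + t * X ω + c * X ω ^ 2) μ :=
    ((integrable_const 1).add (hX.const_mul t)).add (hX2.const_mul c)
  have hmono : ∫ ω, Real.exp (t * X ω) ∂μ ≤ ∫ ω, (1 + t * X ω + c * X ω ^ 2) ∂μ := by
    apply integral_mono_ae hexp hRHSint
    filter_upwards [hae] with ω hω
    have := key_exp_bound ha hω
    calc Real.exp (t * X ω) ≤ 1 + t * X ω + Real.exp a / 2 * (t * X ω) ^ 2 := this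
      _ = 1 + t * X ω + c * X ω ^ 2 := by rw [hc]; ring
  calc ∫ ω, Real.exp (t * X ω) ∂μ ≤ ∫ ω, (1 + t * X ω + c * X ω ^ 2) ∂μ := hmono
    _ = (∫ _, (1:ℝ) ∂μ) + t * ∫ ω, X ω ∂μ + c * ∫ ω, X ω ^ 2 ∂μ := by
        have h1 : Integrable (fun ω => 1 + t * X ω) μ :=
          (integrable_const 1).add (hX.const_mul t)
        rw [integral_add h1 (hX2.const_mul c),
          integral_add (integrable_const 1) (hX.const_mul t),
          integral_const_mul, integral_const_mul]
    _ = 1 + c * ∫ ω, X ω ^ 2 ∂μ := by simp [hmean]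
    _ = 1 + Real.exp a / 2 * t ^ 2 * ∫ ω, X ω ^ 2 ∂μ := by rw [hc]
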